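/- A gate obtained from an m-gate H using a chordless path P of length l−1 (with l vertices, l ≥ 2) is a (m + l − 1)-gate; that is, the number of maximal cliques increases by l − 1 in the recursive construction step. -/

import Mathlib

/-- A maximal clique (a maximal complete vertex set) of a simple graph. -/
def IsMaxClique {V : Type} (G : SimpleGraph V) (s : Set V) : Prop :=
  G.IsClique s ∧ ∀ t : Set V, G.IsClique t → s ⊆ t → s = t

/-- The number of maximal cliques of a graph. -/
noncomputable def numMaxCliques {V : Type} (G : SimpleGraph V) : ℕ :=
  {s : Set V | IsMaxClique G s}.ncard

/-- The graph obtained from `G` and a chordless path on `l` new vertices by joining the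
first vertex of the path to every vertex of `A` and the last vertex to every vertex of `B`. -/
def joinPath {V : Type} (G : SimpleGraph V) (A B : Set V) (l : ℕ) :
    SimpleGraph (V ⊕ Fin l) where
  Adj x y :=
    match x, y with
    | Sum.inl a, Sum.inl b => G.Adj a b
    | Sum.inl a, Sum.inr i => (i.val = 0 ∧ a ∈ A) ∨ (i.val = l - 1 ∧ a ∈ B)
    | Sum.inr i, Sum.inl a => (i.val = 0 ∧ a ∈ A) ∨ (i.val = l - 1 ∧ a ∈ B)
    | Sum.inr i, Sum.inr j => i.val + 1 = j.val ∨ j.val + 1 = i.val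
  symm := by
    refine ⟨?_⟩
    rintro (a | i) (b | j) h <;> simp_all <;> tauto
  loopless := by
    refine ⟨?_⟩
    rintro (a | i) h
    · exact G.loopless.irrefl a h
    · rcases h with h | h <;> omega

/-- Gates, defined recursively (up to isomorphism): chordless cycles `Cₙ`, `n ≥ 4`, are
gates, and joining a new chordless path to two disjoint maximal cliques of a gate
yields a gate. -/
inductive IsGate : {V : Type} → SimpleGraph V → Prop
  | cycle (n : ℕ) (hn : 4 ≤ n) : IsGate (SimpleGraph.cycleGraph n)
  | extend {V : Type} (G : SimpleGraph V) (C C' : Set V) (l : ℕ)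
      (hG : IsGate G) (hC : IsMaxClique G C) (hC' : IsMaxClique G C')
      (hdisj : Disjoint C C') (hl : 2 ≤ l) : IsGate (joinPath G C C' l)
  | iso {V W : Type} (G : SimpleGraph V) (H : SimpleGraph W)
      (hG : IsGate G) (e : G ≃g H) : IsGate H

/-- An EPT representation of `G`: a family of paths in a host tree such that two distinct
vertices are adjacent iff their paths share an edge of the tree. -/
structure EPTRep {V : Type} (G : SimpleGraph V) where
  VT : Type
  T : SimpleGraph VT
  tree : T.IsTree
  src : V → VT
  tgt : V → VT
  walk : (v : V) → T.Walk (src v) (tgt v)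
  isPath : ∀ v, (walk v).IsPath
  adj_iff : ∀ v w : V, v ≠ w →
    (G.Adj v w ↔ ∃ e : Sym2 VT, e ∈ (walk v).edges ∧ e ∈ (walk w).edges)

/-- The edge set of the path representing `v`. -/
def EPTRep.edges {V : Type} {G : SimpleGraph V} (R : EPTRep G) (v : V) :
    Set (Sym2 R.VT) := {e | e ∈ (R.walk v).edges}

/-- The representation is Helly: every nonempty pairwise edge-intersecting subfamily of
paths has a common edge. -/
def EPTRep.Helly {V : Type} {G : SimpleGraph V} (R : EPTRep G) : Prop :=
  ∀ S : Set V, S.Nonempty →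
    (∀ u ∈ S, ∀ v ∈ S, (R.edges u ∩ R.edges v).Nonempty) →
    (⋂ v ∈ S, R.edges v).Nonempty

/-- The host tree has maximum degree at most `h`. -/
def EPTRep.maxDegLE {V : Type} {G : SimpleGraph V} (R : EPTRep G) (h : ℕ) : Prop :=
  ∀ x : R.VT, (R.T.neighborSet x).ncard ≤ h

/-- The class `[h,2,2]`. -/
def InEPTClass (h : ℕ) {V : Type} (G : SimpleGraph V) : Prop :=
  ∃ R : EPTRep G, R.maxDegLE h

/-- Helly EPT graphs. -/
def IsHellyEPT {V : Type} (G : SimpleGraph V) : Prop :=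
  ∃ R : EPTRep G, R.Helly

/-- The class Helly `[h,2,2]`. -/
def InHellyClass (h : ℕ) {V : Type} (G : SimpleGraph V) : Prop :=
  ∃ R : EPTRep G, R.Helly ∧ R.maxDegLE h

/-- Three paths of the representation form a claw at some claw of the host tree. -/
def EPTRep.FormsClaw {V : Type} {G : SimpleGraph V} (R : EPTRep G) (a b c : V) : Prop :=
  ∃ q x y z : R.VT, R.T.Adj q x ∧ R.T.Adj q y ∧ R.T.Adj q z ∧
    x ≠ y ∧ y ≠ z ∧ x ≠ z ∧
    s(q, x) ∈ R.edges a ∧ s(q, y) ∈ R.edges a ∧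
    s(q, y) ∈ R.edges b ∧ s(q, z) ∈ R.edges b ∧
    s(q, x) ∈ R.edges c ∧ s(q, z) ∈ R.edges c

/-- A multipie of size `k` whose paths are those representing the vertices in `S`. -/
def IsMultipie {V : Type} {G : SimpleGraph V} (R : EPTRep G) (k : ℕ) (S : Set V) : Prop :=
  ∃ (q : R.VT) (qi : Fin k → R.VT), Function.Injective qi ∧
    (∀ i, R.T.Adj q (qi i)) ∧
    (∀ v ∈ S, {i : Fin k | qi i ∈ (R.walk v).support}.ncard = 2) ∧
    (∀ u ∈ S, ∀ v ∈ S, ∀ i j : Fin k, i ≠ j →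
      qi i ∈ (R.walk u).support → qi j ∈ (R.walk u).support →
      qi i ∈ (R.walk v).support → qi j ∈ (R.walk v).support → u = v) ∧
    (∀ i, 2 ≤ {v ∈ S | s(q, qi i) ∈ R.edges v}.ncard) ∧
    (∀ a ∈ S, ∀ b ∈ S, ∀ c ∈ S, ¬ R.FormsClaw a b c)

/-- The next index around a cycle. -/
def finNext {k : ℕ} (hk : 0 < k) (i : Fin k) : Fin k :=
  ⟨(i.val + 1) % k, Nat.mod_lt _ hk⟩

/-- `G` has a clique separator: a complete vertex set whose removal disconnects the graph. -/
def HasCliqueSep {V : Type} (G : SimpleGraph V) : Prop :=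
  ∃ C : Set V, G.IsClique C ∧ ¬ (G.induce Cᶜ).Preconnected

/-- An atom of `G`: a maximal vertex subset inducing a connected subgraph without clique
separators. -/
def IsAtomOf {V : Type} (G : SimpleGraph V) (A : Set V) : Prop :=
  (G.induce A).Connected ∧ ¬ HasCliqueSep (G.induce A) ∧
    ∀ B : Set V, A ⊆ B → (G.induce B).Connected → ¬ HasCliqueSep (G.induce B) → A = B

section AuxGate

lemma gate_finite : ∀ {V : Type} {G : SimpleGraph V}, IsGate G → Finite V := by
  intro V G h
  induction h with
  | cycle n hn => infer_instance
  | extend G C C' l hG hC hC' hdisj hl ih => haveI := ih; infer_instance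
  | iso G H hG e ih => haveI := ih; exact Finite.of_equiv _ e.toEquiv

lemma gate_nonempty : ∀ {V : Type} {G : SimpleGraph V}, IsGate G → Nonempty V := by
  intro V G h
  induction h with
  | cycle n hn => exact ⟨⟨0, by omega⟩⟩
  | extend G C C' l hG hC hC' hdisj hl ih => exact ⟨Sum.inr ⟨0, by omega⟩⟩
  | iso G H hG e ih => obtain ⟨v⟩ := ih; exact ⟨e.toEquiv v⟩

lemma maxclique_nonempty {V : Type} [Nonempty V] {G : SimpleGraph V} {s : Set V}
    (h : IsMaxClique G s) : s.Nonempty := by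
  by_contra hs
  rw [Set.not_nonempty_iff_eq_empty] at hs
  obtain ⟨v⟩ := ‹Nonempty V›
  have := h.2 {v} (by simp) (by simp [hs])
  rw [hs] at this
  exact (Set.singleton_ne_empty v) this.symm

end AuxGate

theorem stmt3 {V : Type} (G : SimpleGraph V) (C C' : Set V) (m l : ℕ)
    (hG : IsGate G) (hm : numMaxCliques G = m)
    (hC : IsMaxClique G C) (hC' : IsMaxClique G C')
    (hdisj : Disjoint C C') (hl : 2 ≤ l) :
    numMaxCliques (joinPath G C C' l) = m + l - 1 := by
  classical
  haveI hVfin : Finite V := gate_finite hG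
  haveI hVne : Nonempty V := gate_nonempty hG
  have h0l : 0 < l := by omega
  have hl1 : l - 1 < l := by omega
  have hl1ne : l - 1 ≠ 0 := by omega
  set J := joinPath G C C' l with hJdef
  set p0 : V ⊕ Fin l := Sum.inr ⟨0, h0l⟩ with hp0
  set pL : V ⊕ Fin l := Sum.inr ⟨l - 1, hl1⟩ with hpL
  have hCne : C.Nonempty := maxclique_nonempty hC
  have hCC' : C ≠ C' := by
    rintro rfl
    obtain ⟨a, ha⟩ := hCne
    exact Set.disjoint_left.mp hdisj ha ha
  have hdis : ∀ a, a ∈ C → a ∈ C' → False := fun a h h' => Set.disjoint_left.mp hdisj h h'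
  -- adjacency characterizations
  have adj_ll : ∀ a b : V, J.Adj (Sum.inl a) (Sum.inl b) ↔ G.Adj a b := fun _ _ => Iff.rfl
  have adj_lr : ∀ (a : V) (i : Fin l), J.Adj (Sum.inl a) (Sum.inr i) ↔
      (i.val = 0 ∧ a ∈ C) ∨ (i.val = l - 1 ∧ a ∈ C') := fun _ _ => Iff.rfl
  have adj_rr : ∀ i j : Fin l, J.Adj (Sum.inr i) (Sum.inr j) ↔
      (i.val + 1 = j.val ∨ j.val + 1 = i.val) := fun _ _ => Iff.rfl
  -- no vertex of V is adjacent to two distinct path vertices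
  have adj_two : ∀ (a : V) (i j : Fin l), J.Adj (Sum.inl a) (Sum.inr i) →
      J.Adj (Sum.inl a) (Sum.inr j) → i = j := by
    intro a i j hi hj
    rw [adj_lr] at hi hj
    rcases hi with ⟨h1, h2⟩ | ⟨h1, h2⟩ <;> rcases hj with ⟨h3, h4⟩ | ⟨h3, h4⟩
    · exact Fin.ext (by omega)
    · exact (hdis a h2 h4).elim
    · exact (hdis a h4 h2).elim
    · exact Fin.ext (by omega)
  -- the map on maximal cliques
  set φ : Set V → Set (V ⊕ Fin l) := fun D =>
    (Sum.inl '' D) ∪ {x | D = C ∧ x = p0} ∪ {x | D = C' ∧ x = pL} with hφdef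
  have phi_mem : ∀ (D : Set V) (x : V ⊕ Fin l), x ∈ φ D ↔
      (∃ a ∈ D, x = Sum.inl a) ∨ (D = C ∧ x = p0) ∨ (D = C' ∧ x = pL) := by
    intro D x
    simp only [hφdef, Set.mem_union, Set.mem_setOf_eq, Set.mem_image]
    constructor
    · rintro ((⟨a, ha, rfl⟩ | h) | h)
      · exact Or.inl ⟨a, ha, rfl⟩
      · exact Or.inr (Or.inl h)
      · exact Or.inr (Or.inr h)
    · rintro (⟨a, ha, rfl⟩ | h | h)
      · exact Or.inl (Or.inl ⟨a, ha, rfl⟩)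
      · exact Or.inl (Or.inr h)
      · exact Or.inr h
  have mem_phi_inl : ∀ (D : Set V) (a : V), Sum.inl a ∈ φ D ↔ a ∈ D := by
    intro D a
    rw [phi_mem]
    constructor
    · rintro (⟨b, hb, h⟩ | ⟨_, h⟩ | ⟨_, h⟩)
      · cases h; exact hb
      · simp [hp0] at h
      · simp [hpL] at h
    · intro h; exact Or.inl ⟨a, h, rfl⟩
  have phi_clique : ∀ D : Set V, IsMaxClique G D → J.IsClique (φ D) := by
    intro D hD
    rw [SimpleGraph.isClique_iff]
    intro x hx y hy hxy
    rw [phi_mem] at hx hy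
    rcases hx with ⟨a, ha, rfl⟩ | ⟨hDC, rfl⟩ | ⟨hDC', rfl⟩ <;>
      rcases hy with ⟨b, hb, rfl⟩ | ⟨hDC2, rfl⟩ | ⟨hDC2', rfl⟩
    · exact (adj_ll a b).mpr (hD.1 ha hb (fun h => hxy (by rw [h])))
    · exact (adj_lr a _).mpr (Or.inl ⟨rfl, hDC2 ▸ ha⟩)
    · exact (adj_lr a _).mpr (Or.inr ⟨rfl, hDC2' ▸ ha⟩)
    · exact J.adj_symm ((adj_lr b _).mpr (Or.inl ⟨rfl, hDC ▸ hb⟩))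
    · exact (hxy rfl).elim
    · exact (hCC' (hDC ▸ hDC2')).elim
    · exact J.adj_symm ((adj_lr b _).mpr (Or.inr ⟨rfl, hDC' ▸ hb⟩))
    · exact (hCC' (hDC2 ▸ hDC')).elim
    · exact (hxy rfl).elim
  have phi_max : ∀ D : Set V, IsMaxClique G D → IsMaxClique J (φ D) := by
    intro D hD
    refine ⟨phi_clique D hD, ?_⟩
    intro t ht hsub
    refine Set.Subset.antisymm hsub ?_
    intro x hx
    have hDne : D.Nonempty := maxclique_nonempty hD
    -- inl part of t is exactly D
    have hE : ∀ b : V, Sum.inl b ∈ t → b ∈ D := by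
      have hEcl : G.IsClique {b : V | Sum.inl b ∈ t} := by
        intro b hb c hc hbc
        exact (adj_ll b c).mp (ht hb hc (fun h => hbc (Sum.inl.inj h)))
      have hsubE : D ⊆ {b : V | Sum.inl b ∈ t} := fun b hb =>
        hsub ((mem_phi_inl D b).mpr hb)
      intro b hb
      rw [hD.2 _ hEcl hsubE]; exact hb
    rcases x with a | i
    · exact (mem_phi_inl D a).mpr (hE a hx)
    · -- a path vertex in t
      have hadj : ∀ b ∈ D, (i.val = 0 ∧ b ∈ C) ∨ (i.val = l - 1 ∧ b ∈ C') := by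
        intro b hb
        exact (adj_lr b i).mp (ht (hsub ((mem_phi_inl D b).mpr hb)) hx (by simp))
      rw [phi_mem]
      by_cases hi0 : i.val = 0
      · have hDC : D ⊆ C := fun b hb => ((hadj b hb).resolve_right (fun h => by omega)).2
        have hD_eq : D = C := hD.2 C hC.1 hDC
        refine Or.inr (Or.inl ⟨hD_eq, ?_⟩)
        rw [hp0]; congr 1; exact Fin.ext hi0
      · obtain ⟨a0, ha0⟩ := hDne
        have hil : i.val = l - 1 := ((hadj a0 ha0).resolve_left (fun h => hi0 h.1)).1
        have hDC' : D ⊆ C' := fun b hb => ((hadj b hb).resolve_left (fun h => hi0 h.1)).2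
        have hD_eq : D = C' := hD.2 C' hC'.1 hDC'
        refine Or.inr (Or.inr ⟨hD_eq, ?_⟩)
        rw [hpL]; congr 1; exact Fin.ext hil
  -- path-edge cliques
  set ψ : Fin (l - 1) → Set (V ⊕ Fin l) := fun i =>
    {Sum.inr ⟨i.val, by omega⟩, Sum.inr ⟨i.val + 1, by omega⟩} with hψdef
  have psi_mem : ∀ (i : Fin (l - 1)) (x : V ⊕ Fin l), x ∈ ψ i ↔
      x = Sum.inr ⟨i.val, by omega⟩ ∨ x = Sum.inr ⟨i.val + 1, by omega⟩ := by
    intro i x; simp [hψdef]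
  have psi_max : ∀ i : Fin (l - 1), IsMaxClique J (ψ i) := by
    intro i
    constructor
    · intro x hx y hy hxy
      rw [psi_mem] at hx hy
      rcases hx with rfl | rfl <;> rcases hy with rfl | rfl
      · exact (hxy rfl).elim
      · exact (adj_rr _ _).mpr (Or.inl rfl)
      · exact (adj_rr _ _).mpr (Or.inr rfl)
      · exact (hxy rfl).elim
    · intro t ht hsub
      refine Set.Subset.antisymm hsub ?_
      intro x hx
      have h1 : Sum.inr (⟨i.val, by omega⟩ : Fin l) ∈ t :=
        hsub ((psi_mem i _).mpr (Or.inl rfl))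
      have h2 : Sum.inr (⟨i.val + 1, by omega⟩ : Fin l) ∈ t :=
        hsub ((psi_mem i _).mpr (Or.inr rfl))
      rcases x with a | j
      · have ha1 := (adj_lr a _).mp (J.adj_symm (ht h1 hx (by simp)))
        have ha2 := (adj_lr a _).mp (J.adj_symm (ht h2 hx (by simp)))
        exfalso
        have hi := i.isLt
        simp only [Fin.val_mk] at ha1 ha2
        rcases ha1 with ⟨e1, e2⟩ | ⟨e1, e2⟩ <;> rcases ha2 with ⟨e3, e4⟩ | ⟨e3, e4⟩
        · omega
        · exact hdis a e2 e4
        · omega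
        · omega
      · rw [psi_mem]
        by_cases hj1 : j = (⟨i.val, by omega⟩ : Fin l)
        · exact Or.inl (by rw [hj1])
        by_cases hj2 : j = (⟨i.val + 1, by omega⟩ : Fin l)
        · exact Or.inr (by rw [hj2])
        exfalso
        have e1 := (adj_rr _ _).mp (ht hx h1 (fun h => hj1 (Sum.inr.inj h)))
        have e2 := (adj_rr _ _).mp (ht hx h2 (fun h => hj2 (Sum.inr.inj h)))
        simp only [Fin.val_mk] at e1 e2
        omega
  have inl_clique : ∀ F : Set V, G.IsClique F → J.IsClique (Sum.inl '' F) := by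
    intro F hF
    rintro x ⟨a, ha, rfl⟩ y ⟨b, hb, rfl⟩ hxy
    exact (adj_ll a b).mpr (hF ha hb (fun h => hxy (by rw [h])))
  -- every maximal clique of J is a φ D or a ψ i
  have main_sub : ∀ K : Set (V ⊕ Fin l), IsMaxClique J K →
      (∃ D, IsMaxClique G D ∧ K = φ D) ∨ (∃ i, K = ψ i) := by
    intro K hK
    by_cases hI : ∃ i : Fin l, Sum.inr i ∈ K
    · obtain ⟨i, hiK⟩ := hI
      by_cases hEx : ∃ a : V, Sum.inl a ∈ K
      · obtain ⟨a, haK⟩ := hEx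
        have hadj := (adj_lr a i).mp (hK.1 haK hiK (by simp))
        -- all path vertices in K equal i
        have honly : ∀ j : Fin l, Sum.inr j ∈ K → j = i := by
          intro j hjK
          by_cases hji : j = i
          · exact hji
          · exact adj_two a j i (hK.1 haK hjK (by simp)) (hK.1 haK hiK (by simp))
        rcases hadj with ⟨hi0, haC⟩ | ⟨hil, haC'⟩
        · left
          refine ⟨C, hC, ?_⟩
          refine hK.2 (φ C) (phi_clique C hC) ?_
          intro x hx
          rw [phi_mem]
          rcases x with b | j
          · have hb := (adj_lr b i).mp (hK.1 hx hiK (by simp))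
            rcases hb with ⟨_, hbC⟩ | ⟨hbl, _⟩
            · exact Or.inl ⟨b, hbC, rfl⟩
            · omega
          · have := honly j hx
            refine Or.inr (Or.inl ⟨rfl, ?_⟩)
            rw [this, hp0]; congr 1; exact Fin.ext hi0
        · left
          refine ⟨C', hC', ?_⟩
          refine hK.2 (φ C') (phi_clique C' hC') ?_
          intro x hx
          rw [phi_mem]
          rcases x with b | j
          · have hb := (adj_lr b i).mp (hK.1 hx hiK (by simp))
            rcases hb with ⟨hb0, hbC⟩ | ⟨_, hbC'⟩
            · omega
            · exact Or.inl ⟨b, hbC', rfl⟩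
          · have := honly j hx
            refine Or.inr (Or.inr ⟨rfl, ?_⟩)
            rw [this, hpL]; congr 1; exact Fin.ext hil
      · -- no inl vertex in K
        push_neg at hEx
        right
        by_cases hj : ∃ j : Fin l, Sum.inr j ∈ K ∧ j ≠ i
        · obtain ⟨j, hjK, hji⟩ := hj
          have hadj := (adj_rr j i).mp (hK.1 hjK hiK (fun h => hji (Sum.inr.inj h)))
          -- normalize: let s be the smaller index
          have key : ∀ s t : Fin l, Sum.inr s ∈ K → Sum.inr t ∈ K → s.val + 1 = t.val →
              ∃ i' : Fin (l - 1), K = ψ i' := by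
            intro s t hsK htK hst
            have hsl : s.val < l - 1 := by have := t.isLt; omega
            refine ⟨⟨s.val, hsl⟩, ?_⟩
            ext x
            rw [psi_mem]
            constructor
            · intro hx
              rcases x with a | k
              · exact (hEx a hx).elim
              · by_cases hks : k = s
                · exact Or.inl (by rw [hks])
                by_cases hkt : k = t
                · refine Or.inr ?_
                  rw [hkt]; congr 1
                  exact Fin.ext (show t.val = s.val + 1 by omega)
                exfalso
                have e1 := (adj_rr k s).mp (hK.1 hx hsK (fun h => hks (Sum.inr.inj h)))
                have e2 := (adj_rr k t).mp (hK.1 hx htK (fun h => hkt (Sum.inr.inj h)))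
                omega
            · rintro (rfl | rfl)
              · exact hsK
              · convert htK using 2
                exact Fin.ext (by simp only [Fin.val_mk]; omega)
          rcases hadj with h | h
          · exact key j i hjK hiK h
          · exact key i j hiK hjK h
        · -- K = {Sum.inr i}, contradiction with maximality
          exfalso
          push_neg at hj
          have hKsub : ∀ j : Fin l, Sum.inr j ∈ K → j = i := hj
          rcases Nat.lt_or_ge (i.val + 1) l with hlt | hge
          · set j : Fin l := ⟨i.val + 1, hlt⟩ with hjdef
            have hcl : J.IsClique {Sum.inr i, Sum.inr j} := by
              intro x hx y hy hxy
              rcases hx with rfl | rfl <;> rcases hy with rfl | rfl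
              · exact (hxy rfl).elim
              · exact (adj_rr _ _).mpr (Or.inl rfl)
              · exact (adj_rr _ _).mpr (Or.inr rfl)
              · exact (hxy rfl).elim
            have hsub : K ⊆ {Sum.inr i, Sum.inr j} := by
              intro x hx
              rcases x with a | k
              · exact (hEx a hx).elim
              · rw [hKsub k hx]; exact Or.inl rfl
            have heq := hK.2 _ hcl hsub
            have : Sum.inr j ∈ K := by rw [heq]; exact Or.inr rfl
            have := hKsub j this
            rw [hjdef] at this
            have := congrArg Fin.val this
            simp at this
          · have hi1 : 1 ≤ i.val := by have := i.isLt; omega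
            set j : Fin l := ⟨i.val - 1, by omega⟩ with hjdef
            have hcl : J.IsClique {Sum.inr i, Sum.inr j} := by
              intro x hx y hy hxy
              rcases hx with rfl | rfl <;> rcases hy with rfl | rfl
              · exact (hxy rfl).elim
              · exact (adj_rr _ _).mpr (Or.inr (by simp [hjdef]; omega))
              · exact (adj_rr _ _).mpr (Or.inl (by simp [hjdef]; omega))
              · exact (hxy rfl).elim
            have hsub : K ⊆ {Sum.inr i, Sum.inr j} := by
              intro x hx
              rcases x with a | k
              · exact (hEx a hx).elim
              · rw [hKsub k hx]; exact Or.inl rfl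
            have heq := hK.2 _ hcl hsub
            have : Sum.inr j ∈ K := by rw [heq]; exact Or.inr rfl
            have := hKsub j this
            rw [hjdef] at this
            have := congrArg Fin.val this
            simp at this
            omega
    · -- no path vertex in K
      push_neg at hI
      left
      set E : Set V := {a | Sum.inl a ∈ K} with hEdef
      have hEcl : G.IsClique E := by
        intro a ha b hb hab
        exact (adj_ll a b).mp (hK.1 ha hb (fun h => hab (Sum.inl.inj h)))
      have hKE : K = Sum.inl '' E := by
        ext x
        rcases x with a | i
        · simp [hEdef]
        · simp only [Set.mem_image]
          constructor
          · intro h; exact (hI i h).elim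
          · rintro ⟨a, _, h⟩; simp at h
      have hnC : ¬ E ⊆ C := by
        intro hEC
        have hsub : K ⊆ φ C := by
          rw [hKE]
          intro x ⟨a, ha, hxa⟩
          rw [← hxa, mem_phi_inl]
          exact hEC ha
        have heq := hK.2 (φ C) (phi_clique C hC) hsub
        have : p0 ∈ K := by
          rw [heq, phi_mem]; exact Or.inr (Or.inl ⟨rfl, rfl⟩)
        exact hI _ this
      have hnC' : ¬ E ⊆ C' := by
        intro hEC
        have hsub : K ⊆ φ C' := by
          rw [hKE]
          intro x ⟨a, ha, hxa⟩
          rw [← hxa, mem_phi_inl]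
          exact hEC ha
        have heq := hK.2 (φ C') (phi_clique C' hC') hsub
        have : pL ∈ K := by
          rw [heq, phi_mem]; exact Or.inr (Or.inr ⟨rfl, rfl⟩)
        exact hI _ this
      have hEmax : IsMaxClique G E := by
        refine ⟨hEcl, ?_⟩
        intro F hF hEF
        have heq := hK.2 (Sum.inl '' F) (inl_clique F hF)
          (by rw [hKE]; exact Set.image_mono hEF)
        refine Set.Subset.antisymm hEF ?_
        intro a ha
        have : Sum.inl a ∈ K := by rw [heq]; exact ⟨a, ha, rfl⟩
        exact this
      refine ⟨E, hEmax, ?_⟩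
      rw [hKE]
      ext x
      rw [phi_mem]
      simp only [Set.mem_image]
      constructor
      · rintro ⟨a, ha, rfl⟩; exact Or.inl ⟨a, ha, rfl⟩
      · rintro (⟨a, ha, rfl⟩ | ⟨hEC, rfl⟩ | ⟨hEC', rfl⟩)
        · exact ⟨a, ha, rfl⟩
        · exact absurd (hEC ▸ Set.Subset.refl E) hnC
        · exact absurd (hEC' ▸ Set.Subset.refl E) hnC'
  -- the set of maximal cliques of J
  set M : Set (Set V) := {s | IsMaxClique G s} with hMdef
  have hS : {s | IsMaxClique J s} = φ '' M ∪ Set.range ψ := by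
    ext K
    simp only [Set.mem_setOf_eq, Set.mem_union, Set.mem_image, Set.mem_range]
    constructor
    · intro hK
      rcases main_sub K hK with ⟨D, hD, rfl⟩ | ⟨i, rfl⟩
      · exact Or.inl ⟨D, hD, rfl⟩
      · exact Or.inr ⟨i, rfl⟩
    · rintro (⟨D, hD, rfl⟩ | ⟨i, rfl⟩)
      · exact phi_max D hD
      · exact psi_max i
  have hinjφ : Function.Injective φ := by
    intro D E h
    ext a
    rw [← mem_phi_inl D a, ← mem_phi_inl E a, h]
  have hinjψ : Function.Injective ψ := by
    intro i j h
    have h1 : Sum.inr (⟨i.val, by omega⟩ : Fin l) ∈ ψ j := by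
      rw [← h]; exact (psi_mem i _).mpr (Or.inl rfl)
    have h2 : Sum.inr (⟨i.val + 1, by omega⟩ : Fin l) ∈ ψ j := by
      rw [← h]; exact (psi_mem i _).mpr (Or.inr rfl)
    rw [psi_mem] at h1 h2
    simp only [Sum.inr.injEq, Fin.mk.injEq] at h1 h2
    exact Fin.ext (by omega)
  have hdisj2 : Disjoint (φ '' M) (Set.range ψ) := by
    rw [Set.disjoint_left]
    rintro s ⟨D, hD, rfl⟩ ⟨i, hi⟩
    obtain ⟨a, ha⟩ := maxclique_nonempty (hD : IsMaxClique G D)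
    have : Sum.inl a ∈ ψ i := by rw [hi]; exact (mem_phi_inl D a).mpr ha
    rw [psi_mem] at this
    rcases this with h | h <;> simp at h
  haveI : Finite (V ⊕ Fin l) := by infer_instance
  have hcount : numMaxCliques J = (φ '' M).ncard + (Set.range ψ).ncard := by
    rw [numMaxCliques, hS]
    exact Set.ncard_union_eq hdisj2 (Set.toFinite _) (Set.toFinite _)
  have hM : (φ '' M).ncard = m := by
    rw [Set.ncard_image_of_injective _ hinjφ, ← hm, numMaxCliques]
  have hR : (Set.range ψ).ncard = l - 1 := by
    rw [← Set.image_univ, Set.ncard_image_of_injective _ hinjψ, Set.ncard_univ,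
      Nat.card_eq_fintype_card, Fintype.card_fin]
  rw [hcount, hM, hR]
  omega
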